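/- Let Q be a finite acyclic quiver, k a field, and V a representation of Q over k. Then the sequence 0 → ⊕_{a∈Q₁} V(ta) ⊗ P_{ha} →^{d^V} ⊕_{x∈Q₀} V(x) ⊗ P_x →^{f^V} V → 0 is exact (vertexwise: at every vertex y the resulting sequence of k-vector spaces is exact), where f^V(v ⊗ p) = V(p)v and d^V(v ⊗ p) = V(a)v ⊗ p − v ⊗ pa for v in the appropriate vertex space and p a path. -/

import Mathlib

open CategoryTheory

/-- The quiver with vertex set `Q₀`, arrow set `Q₁`, tail map `t` and head map `h`. -/
def QuiverOf (Q₀ Q₁ : Type) (t h : Q₁ → Q₀) : Type := Q₀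

instance (Q₀ Q₁ : Type) (t h : Q₁ → Q₀) : Quiver (QuiverOf Q₀ Q₁ t h) :=
  ⟨fun x y => { a : Q₁ // t a = x ∧ h a = y }⟩

instance (Q₀ Q₁ : Type) (t h : Q₁ → Q₀) [DecidableEq Q₀] :
    DecidableEq (QuiverOf Q₀ Q₁ t h) :=
  inferInstanceAs (DecidableEq Q₀)

variable {Q₀ Q₁ : Type} {t h : Q₁ → Q₀}

/-- An element of `Q₀`, seen as a vertex of the quiver. -/
abbrev vtx (Q₀ Q₁ : Type) (t h : Q₁ → Q₀) (x : Q₀) : QuiverOf Q₀ Q₁ t h := x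

/-- A vertex, seen as an object of the path category of the quiver. -/
def toOb (x : QuiverOf Q₀ Q₁ t h) : Paths (QuiverOf Q₀ Q₁ t h) := x

/-- A path, seen as a morphism in the path category of the quiver. -/
def toHom {x y : QuiverOf Q₀ Q₁ t h} (p : Quiver.Path x y) : toOb x ⟶ toOb y := p

/-- The arrow `a : Q₁`, as an arrow `t a ⟶ h a` of the quiver. -/
def arrowOf (Q₀ : Type) (t h : Q₁ → Q₀) (a : Q₁) :
    Quiver.Hom (V := QuiverOf Q₀ Q₁ t h) (t a) (h a) := ⟨a, rfl, rfl⟩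

variable (k : Type) [Field k]

/-- The category of representations of the quiver over `k`. -/
abbrev RepOf (Q₀ Q₁ : Type) (t h : Q₁ → Q₀) : Type _ :=
  Paths (QuiverOf Q₀ Q₁ t h) ⥤ ModuleCat k

/-- The linear map that a representation `V` attaches to the arrow `a`. -/
def arrowMap (V : RepOf k Q₀ Q₁ t h) (a : Q₁) :
    V.obj (toOb (t a)) →ₗ[k] V.obj (toOb (h a)) :=
  (V.map (toHom (Quiver.Hom.toPath (arrowOf Q₀ t h a)))).hom

variable [DecidableEq Q₀] [DecidableEq Q₁]

/-- The vertex space at `y` of `⊕_{x ∈ Q₀} V(x) ⊗ P_x`, where `P_x(y)` is the free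
`k`-vector space on the paths from `x` to `y`. -/
abbrev Std₀ (V : RepOf k Q₀ Q₁ t h) (y : QuiverOf Q₀ Q₁ t h) : Type _ :=
  DirectSum (QuiverOf Q₀ Q₁ t h)
    (fun x => TensorProduct k (V.obj (toOb x)) (Quiver.Path x y →₀ k))

/-- The vertex space at `y` of `⊕_{a ∈ Q₁} V(ta) ⊗ P_{ha}`. -/
abbrev Std₁ (V : RepOf k Q₀ Q₁ t h) (y : QuiverOf Q₀ Q₁ t h) : Type _ :=
  DirectSum Q₁
    (fun a => TensorProduct k (V.obj (toOb (t a)))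
      (Quiver.Path (vtx Q₀ Q₁ t h (h a)) y →₀ k))

/-- The augmentation `f^V : ⊕_{x} V(x) ⊗ P_x → V` at vertex `y`, determined by
`f^V(v ⊗ p) = V(p) v`. -/
noncomputable def fV (V : RepOf k Q₀ Q₁ t h) (y : QuiverOf Q₀ Q₁ t h) :
    Std₀ k V y →ₗ[k] V.obj (toOb y) :=
  DirectSum.toModule k _ _ fun x =>
    TensorProduct.lift
      (((Finsupp.lift (V.obj (toOb x) →ₗ[k] V.obj (toOb y)) k (Quiver.Path x y))
        (fun p => ((V.map (toHom p)).hom : V.obj (toOb x) →ₗ[k] V.obj (toOb y)))).flip)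

/-- The summand of `⊕_{a} V(ta) ⊗ P_{ha}` at the arrow `a`, at vertex `y`. -/
abbrev Std₁Summand (V : RepOf k Q₀ Q₁ t h) (a : Q₁) (y : QuiverOf Q₀ Q₁ t h) : Type _ :=
  TensorProduct k (V.obj (toOb (t a))) (Quiver.Path (vtx Q₀ Q₁ t h (h a)) y →₀ k)

/-- First part of the differential: `v ⊗ p ↦ (V(a) v) ⊗ p`, landing in the summand of
`⊕_{x} V(x) ⊗ P_x` at `x = ha`. -/
noncomputable def dV₁ (V : RepOf k Q₀ Q₁ t h) (a : Q₁) (y : QuiverOf Q₀ Q₁ t h) :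
    Std₁Summand k V a y →ₗ[k] Std₀ k V y :=
  DirectSum.lof k (QuiverOf Q₀ Q₁ t h)
      (fun x => TensorProduct k (V.obj (toOb x)) (Quiver.Path x y →₀ k))
      (vtx Q₀ Q₁ t h (h a)) ∘ₗ
    TensorProduct.map (arrowMap k V a) LinearMap.id

/-- Second part of the differential: `v ⊗ p ↦ v ⊗ (pa)`, landing in the summand of
`⊕_{x} V(x) ⊗ P_x` at `x = ta`. -/
noncomputable def dV₂ (V : RepOf k Q₀ Q₁ t h) (a : Q₁) (y : QuiverOf Q₀ Q₁ t h) :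
    Std₁Summand k V a y →ₗ[k] Std₀ k V y :=
  DirectSum.lof k (QuiverOf Q₀ Q₁ t h)
      (fun x => TensorProduct k (V.obj (toOb x)) (Quiver.Path x y →₀ k))
      (vtx Q₀ Q₁ t h (t a)) ∘ₗ
    TensorProduct.map LinearMap.id
      (Finsupp.lmapDomain k k
        (fun p : Quiver.Path (vtx Q₀ Q₁ t h (h a)) y =>
          (Quiver.Hom.toPath (arrowOf Q₀ t h a)).comp p))

/-- The differential `d^V : ⊕_{a} V(ta) ⊗ P_{ha} → ⊕_{x} V(x) ⊗ P_x` at vertex `y`,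
determined by `d^V(v ⊗ p) = (V(a) v) ⊗ p − v ⊗ (pa)`. -/
noncomputable def dV (V : RepOf k Q₀ Q₁ t h) (y : QuiverOf Q₀ Q₁ t h) :
    Std₁ k V y →ₗ[k] Std₀ k V y :=
  DirectSum.toModule k _ _ fun a => dV₁ k V a y + (-1 : k) • dV₂ k V a y

namespace StdRes

open Quiver

variable {Q₀ Q₁ : Type} {t h : Q₁ → Q₀}

/-- The list of arrows (as elements of `Q₁`) of a path. -/
def arrList : ∀ {x z : QuiverOf Q₀ Q₁ t h}, Quiver.Path x z → List Q₁
  | _, _, Quiver.Path.nil => []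
  | _, _, Quiver.Path.cons q e => arrList q ++ [e.1]

lemma arrList_comp {x z w : QuiverOf Q₀ Q₁ t h} (p : Quiver.Path x z) (q : Quiver.Path z w) :
    arrList (p.comp q) = arrList p ++ arrList q := by
  induction q with
  | nil => simp [arrList]
  | cons q e ih => simp [Quiver.Path.comp_cons, arrList, ih]

lemma arrList_cast {x z x' z' : QuiverOf Q₀ Q₁ t h} (hx : x = x') (hz : z = z')
    (p : Quiver.Path x z) : arrList (p.cast hx hz) = arrList p := by
  subst hx; subst hz; rw [Quiver.Path.cast_rfl_rfl]

lemma arrList_toPath {x z : QuiverOf Q₀ Q₁ t h} (e : x ⟶ z) :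
    arrList e.toPath = [e.1] := by
  simp [Quiver.Hom.toPath, arrList]

/-- First-arrow decomposition of a path of positive length. -/
lemma decomp {x y : QuiverOf Q₀ Q₁ t h} (p : Quiver.Path x y) (hp : p.length ≠ 0) :
    ∃ (a : Q₁) (ha : vtx Q₀ Q₁ t h (t a) = x) (q : Quiver.Path (vtx Q₀ Q₁ t h (h a)) y),
      p = ((Quiver.Hom.toPath (arrowOf Q₀ t h a)).comp q).cast ha rfl := by
  obtain ⟨n, hn⟩ : ∃ n, p.length = n + 1 := ⟨p.length - 1, by omega⟩
  obtain ⟨c, f, q, hq, rfl⟩ := p.eq_toPath_comp_of_length_eq_succ hn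
  obtain ⟨a, h1, h2⟩ := f
  subst h1
  subst h2
  refine ⟨a, rfl, q, by rw [Quiver.Path.cast_rfl_rfl]; rfl⟩

/-- Uniqueness of the first-arrow decomposition. -/
lemma decomp_unique {x y : QuiverOf Q₀ Q₁ t h} {a a' : Q₁}
    (ha : vtx Q₀ Q₁ t h (t a) = x) (ha' : vtx Q₀ Q₁ t h (t a') = x)
    {q : Quiver.Path (vtx Q₀ Q₁ t h (h a)) y} {q' : Quiver.Path (vtx Q₀ Q₁ t h (h a')) y}
    (heq : ((Quiver.Hom.toPath (arrowOf Q₀ t h a)).comp q).cast ha rfl =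
      ((Quiver.Hom.toPath (arrowOf Q₀ t h a')).comp q').cast ha' rfl) :
    ∃ (haa : a = a'), HEq q q' := by
  subst ha
  have haa : a = a' := by
    have h2 := congrArg arrList heq
    erw [arrList_cast, arrList_cast, arrList_comp, arrList_comp, arrList_toPath,
      arrList_toPath] at h2
    exact (List.cons_eq_cons.mp h2).1
  subst haa
  refine ⟨rfl, heq_of_eq ?_⟩
  have hrfl : ha' = rfl := rfl
  rw [hrfl, Quiver.Path.cast_rfl_rfl, Quiver.Path.cast_rfl_rfl] at heq
  exact ((Quiver.Path.comp_inj' rfl).1 heq).2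


lemma length_cast {x z x' z' : QuiverOf Q₀ Q₁ t h} (hx : x = x') (hz : z = z')
    (p : Quiver.Path x z) : (p.cast hx hz).length = p.length := by
  subst hx; subst hz; rw [Quiver.Path.cast_rfl_rfl]

lemma finite_path [Finite Q₀] [Finite Q₁]
    (hacyclic : ∀ (x : QuiverOf Q₀ Q₁ t h) (p : Quiver.Path x x), p = Quiver.Path.nil)
    (y : QuiverOf Q₀ Q₁ t h) :
    ∀ x : QuiverOf Q₀ Q₁ t h, Finite (Quiver.Path x y) := by
  classical
  set r : QuiverOf Q₀ Q₁ t h → QuiverOf Q₀ Q₁ t h → Prop :=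
    fun z x => Nonempty (Quiver.Path x z) ∧ x ≠ z with hrdef
  have htr : ∀ {a b c : QuiverOf Q₀ Q₁ t h}, r a b → r b c → r a c := by
    rintro a b c ⟨⟨p⟩, hba⟩ ⟨⟨q⟩, hcb⟩
    refine ⟨⟨q.comp p⟩, ?_⟩
    rintro rfl
    have h0 := hacyclic _ (p.comp q)
    have h1 := congrArg Quiver.Path.length h0
    rw [Quiver.Path.length_comp] at h1
    simp only [Quiver.Path.length_nil] at h1
    exact hba (p.eq_of_length_zero (by omega))
  have hirr : ∀ a : QuiverOf Q₀ Q₁ t h, ¬ r a a := by rintro a ⟨_, hne⟩; exact hne rfl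
  haveI : IsTrans (QuiverOf Q₀ Q₁ t h) r := ⟨fun _ _ _ hab hbc => htr hab hbc⟩
  haveI : IsIrrefl (QuiverOf Q₀ Q₁ t h) r := ⟨hirr⟩
  haveI : Finite (QuiverOf Q₀ Q₁ t h) := inferInstanceAs (Finite Q₀)
  have wf : WellFounded r := Finite.wellFounded_of_trans_of_irrefl r
  intro x₀
  refine wf.induction (C := fun v => Finite (Quiver.Path v y)) x₀ ?_
  intro x ih
  haveI hfib : ∀ a : Q₁,
      Finite ((_ : vtx Q₀ Q₁ t h (t a) = x) ×' Quiver.Path (vtx Q₀ Q₁ t h (h a)) y) := by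
    intro a
    by_cases hta : vtx Q₀ Q₁ t h (t a) = x
    · haveI : Finite (Quiver.Path (vtx Q₀ Q₁ t h (h a)) y) := by
        refine ih _ ⟨⟨((arrowOf Q₀ t h a).toPath).cast hta rfl⟩, ?_⟩
        intro hx
        subst hx
        have h0 := hacyclic _ (((arrowOf Q₀ t h a).toPath).cast hta rfl)
        have h1 := congrArg Quiver.Path.length h0
        rw [length_cast] at h1
        exact Nat.succ_ne_zero _ h1
      infer_instance
    · haveI : IsEmpty ((_ : vtx Q₀ Q₁ t h (t a) = x) ×' Quiver.Path (vtx Q₀ Q₁ t h (h a)) y) :=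
        ⟨fun z => hta z.1⟩
      infer_instance
  refine Finite.of_surjective
    (f := fun z : PLift (x = y) ⊕
        ((a : Q₁) ×' (_ : vtx Q₀ Q₁ t h (t a) = x) ×' Quiver.Path (vtx Q₀ Q₁ t h (h a)) y) =>
      match z with
      | Sum.inl hxy => (Quiver.Path.nil : Quiver.Path x x).cast rfl hxy.down
      | Sum.inr ⟨a, ha, q⟩ => ((Quiver.Hom.toPath (arrowOf Q₀ t h a)).comp q).cast ha rfl)
    ?_
  intro p
  by_cases hp : p.length = 0
  · have hxy := p.eq_of_length_zero hp
    refine ⟨Sum.inl ⟨hxy⟩, ?_⟩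
    subst hxy
    exact (Quiver.Path.cast_rfl_rfl _).trans (hacyclic x p).symm
  · obtain ⟨a, ha, q, hq⟩ := decomp p hp
    exact ⟨Sum.inr ⟨a, ha, q⟩, hq.symm⟩

lemma length_comp_arrow {y : QuiverOf Q₀ Q₁ t h} (a : Q₁)
    (p : Quiver.Path (vtx Q₀ Q₁ t h (h a)) y) :
    ¬ ((Quiver.Hom.toPath (arrowOf Q₀ t h a)).comp p).length = 0 := by
  erw [Quiver.Path.length_comp]
  intro h1
  exact Nat.succ_ne_zero _ (Nat.add_eq_zero_iff.mp h1).1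

section Linear

variable (k : Type) [Field k] [DecidableEq Q₀] [DecidableEq Q₁]
variable (V : RepOf k Q₀ Q₁ t h) (y : QuiverOf Q₀ Q₁ t h)

/-- A generic linear map out of `Std₀`, given its values on generators. -/
noncomputable def ofStd₀ {W : Type*} [AddCommMonoid W] [Module k W]
    (G : ∀ x : QuiverOf Q₀ Q₁ t h, Quiver.Path x y → (V.obj (toOb x) →ₗ[k] W)) :
    Std₀ k V y →ₗ[k] W :=
  DirectSum.toModule k _ _ fun x =>
    TensorProduct.lift ((Finsupp.lift (V.obj (toOb x) →ₗ[k] W) k (Quiver.Path x y) (G x)).flip)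

lemma ofStd₀_lof {W : Type*} [AddCommMonoid W] [Module k W]
    (G : ∀ x : QuiverOf Q₀ Q₁ t h, Quiver.Path x y → (V.obj (toOb x) →ₗ[k] W))
    (x : QuiverOf Q₀ Q₁ t h) (v : V.obj (toOb x)) (p : Quiver.Path x y) (c : k) :
    ofStd₀ k V y G ((DirectSum.lof k (QuiverOf Q₀ Q₁ t h)
        (fun x => TensorProduct k (V.obj (toOb x)) (Quiver.Path x y →₀ k)) x)
      (v ⊗ₜ Finsupp.single p c)) = c • G x p v := by
  simp [ofStd₀, DirectSum.toModule_lof, Finsupp.lift_apply, Finsupp.sum_single_index]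

lemma fV_eq : fV k V y = ofStd₀ k V y
    (fun x p => ((V.map (toHom p)).hom : V.obj (toOb x) →ₗ[k] V.obj (toOb y))) := rfl

lemma fV_lof (x : QuiverOf Q₀ Q₁ t h) (v : V.obj (toOb x)) (p : Quiver.Path x y) (c : k) :
    fV k V y ((DirectSum.lof k (QuiverOf Q₀ Q₁ t h)
        (fun x => TensorProduct k (V.obj (toOb x)) (Quiver.Path x y →₀ k)) x)
      (v ⊗ₜ Finsupp.single p c)) =
      c • ((V.map (toHom p)).hom : V.obj (toOb x) →ₗ[k] V.obj (toOb y)) v := by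
  rw [fV_eq, ofStd₀_lof]

lemma dV_lof (a : Q₁) (v : V.obj (toOb (vtx Q₀ Q₁ t h (t a))))
    (p : Quiver.Path (vtx Q₀ Q₁ t h (h a)) y) (c : k) :
    dV k V y ((DirectSum.lof k Q₁ _ a) (v ⊗ₜ Finsupp.single p c)) =
      dV₁ k V a y (v ⊗ₜ Finsupp.single p c)
        + (-1 : k) • dV₂ k V a y (v ⊗ₜ Finsupp.single p c) := by
  simp only [dV, DirectSum.toModule_lof, LinearMap.add_apply, LinearMap.smul_apply]

lemma dV₁_tmul (a : Q₁) (v : V.obj (toOb (vtx Q₀ Q₁ t h (t a))))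
    (p : Quiver.Path (vtx Q₀ Q₁ t h (h a)) y) (c : k) :
    dV₁ k V a y (v ⊗ₜ Finsupp.single p c) =
      (DirectSum.lof k (QuiverOf Q₀ Q₁ t h)
        (fun x => TensorProduct k (V.obj (toOb x)) (Quiver.Path x y →₀ k))
        (vtx Q₀ Q₁ t h (h a))) ((arrowMap k V a v) ⊗ₜ Finsupp.single p c) := by
  simp [dV₁]

lemma dV₂_tmul (a : Q₁) (v : V.obj (toOb (vtx Q₀ Q₁ t h (t a))))
    (p : Quiver.Path (vtx Q₀ Q₁ t h (h a)) y) (c : k) :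
    dV₂ k V a y (v ⊗ₜ Finsupp.single p c) =
      (DirectSum.lof k (QuiverOf Q₀ Q₁ t h)
        (fun x => TensorProduct k (V.obj (toOb x)) (Quiver.Path x y →₀ k))
        (vtx Q₀ Q₁ t h (t a)))
          (v ⊗ₜ Finsupp.single ((Quiver.Hom.toPath (arrowOf Q₀ t h a)).comp p) c) := by
  simp [dV₂, Finsupp.lmapDomain_apply, Finsupp.mapDomain_single]

/-- The second half of the differential, as a map on all of `Std₁`. -/
noncomputable def d₂tot : Std₁ k V y →ₗ[k] Std₀ k V y :=
  DirectSum.toModule k Q₁ _ fun a => dV₂ k V a y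

lemma d₂tot_lof (a : Q₁) (v : V.obj (toOb (vtx Q₀ Q₁ t h (t a))))
    (p : Quiver.Path (vtx Q₀ Q₁ t h (h a)) y) (c : k) :
    d₂tot k V y ((DirectSum.lof k Q₁ _ a) (v ⊗ₜ Finsupp.single p c)) =
      dV₂ k V a y (v ⊗ₜ Finsupp.single p c) := by
  simp [d₂tot, DirectSum.toModule_lof]

/-- The section of `fV` given by `v ↦ v ⊗ e_y`. -/
noncomputable def sig : V.obj (toOb y) →ₗ[k] Std₀ k V y :=
  (DirectSum.lof k (QuiverOf Q₀ Q₁ t h)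
      (fun x => TensorProduct k (V.obj (toOb x)) (Quiver.Path x y →₀ k)) y).comp
    ((TensorProduct.mk k (V.obj (toOb y)) (Quiver.Path y y →₀ k)).flip
      (Finsupp.single Quiver.Path.nil 1))

lemma sig_apply (w : V.obj (toOb y)) :
    sig k V y w = (DirectSum.lof k (QuiverOf Q₀ Q₁ t h)
      (fun x => TensorProduct k (V.obj (toOb x)) (Quiver.Path x y →₀ k)) y)
        (w ⊗ₜ Finsupp.single Quiver.Path.nil 1) := rfl

/-- Projection onto the coefficient of the trivial path. -/
noncomputable def piN : Std₀ k V y →ₗ[k] V.obj (toOb y) :=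
  ofStd₀ k V y (fun x p => if p.length = 0
    then ((V.map (toHom p)).hom : V.obj (toOb x) →ₗ[k] V.obj (toOb y)) else 0)

/-- The retraction of `d₂tot`, removing the first arrow of each path. -/
noncomputable def rr : Std₀ k V y →ₗ[k] Std₁ k V y :=
  ofStd₀ k V y (fun x p =>
    if hp : p.length = 0 then (0 : V.obj (toOb x) →ₗ[k] Std₁ k V y) else
      (((DirectSum.lof k Q₁
          (fun a => TensorProduct k (V.obj (toOb (vtx Q₀ Q₁ t h (t a))))
            (Quiver.Path (vtx Q₀ Q₁ t h (h a)) y →₀ k)) (StdRes.decomp p hp).choose).comp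
        ((TensorProduct.mk k _ _).flip
          (Finsupp.single (StdRes.decomp p hp).choose_spec.choose_spec.choose 1))).comp
        ((V.map (eqToHom (congrArg toOb (StdRes.decomp p hp).choose_spec.choose.symm))).hom :
          V.obj (toOb x) →ₗ[k] V.obj (toOb (vtx Q₀ Q₁ t h (t (StdRes.decomp p hp).choose))))))

lemma map_nil : ((V.map (toHom (Quiver.Path.nil : Quiver.Path y y))).hom :
    V.obj (toOb y) →ₗ[k] V.obj (toOb y)) = LinearMap.id := by
  have : toHom (Quiver.Path.nil : Quiver.Path y y) = 𝟙 (toOb y) := rfl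
  rw [this, CategoryTheory.Functor.map_id]
  rfl

lemma map_comp_arrow (a : Q₁) (p : Quiver.Path (vtx Q₀ Q₁ t h (h a)) y) :
    ((V.map (toHom ((Quiver.Hom.toPath (arrowOf Q₀ t h a)).comp p))).hom :
      V.obj (toOb (vtx Q₀ Q₁ t h (t a))) →ₗ[k] V.obj (toOb y)) =
    ((V.map (toHom p)).hom : V.obj (toOb (vtx Q₀ Q₁ t h (h a))) →ₗ[k] V.obj (toOb y)).comp
      (arrowMap k V a) := by
  have : toHom ((Quiver.Hom.toPath (arrowOf Q₀ t h a)).comp p) =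
      toHom (Quiver.Hom.toPath (arrowOf Q₀ t h a)) ≫ toHom p := rfl
  rw [this, CategoryTheory.Functor.map_comp]
  rfl

lemma std₁_hom_ext {W : Type*} [AddCommMonoid W] [Module k W] {f g : Std₁ k V y →ₗ[k] W}
    (H : ∀ (a : Q₁) (v : V.obj (toOb (vtx Q₀ Q₁ t h (t a))))
      (p : Quiver.Path (vtx Q₀ Q₁ t h (h a)) y),
      f ((DirectSum.lof k Q₁ _ a) (v ⊗ₜ Finsupp.single p (1:k))) =
      g ((DirectSum.lof k Q₁ _ a) (v ⊗ₜ Finsupp.single p (1:k)))) : f = g := by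
  refine DirectSum.linearMap_ext k fun a => TensorProduct.ext' fun v n => ?_
  induction n using Finsupp.induction_linear with
  | zero => simp
  | add n₁ n₂ h₁ h₂ =>
      simp only [LinearMap.comp_apply] at h₁ h₂ ⊢
      simp only [TensorProduct.tmul_add, map_add, h₁, h₂]
  | single p c =>
      have hc : v ⊗ₜ[k] Finsupp.single p c = c • (v ⊗ₜ[k] Finsupp.single p (1:k)) := by
        rw [← Finsupp.smul_single_one, TensorProduct.tmul_smul]
      simp only [LinearMap.comp_apply, hc, map_smul]
      rw [H a v p]

lemma fV_sig (w : V.obj (toOb y)) : fV k V y (sig k V y w) = w := by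
  rw [sig_apply, fV_lof, map_nil]
  simp only [one_smul]
  rfl

lemma piN_sig (w : V.obj (toOb y)) : piN k V y (sig k V y w) = w := by
  rw [sig_apply, piN, ofStd₀_lof]
  rw [if_pos (Quiver.Path.length_nil : (Quiver.Path.nil : Quiver.Path y y).length = 0), map_nil]
  simp only [one_smul]
  rfl

lemma rr_sig (w : V.obj (toOb y)) : rr k V y (sig k V y w) = 0 := by
  rw [sig_apply, rr, ofStd₀_lof]
  rw [dif_pos (Quiver.Path.length_nil : (Quiver.Path.nil : Quiver.Path y y).length = 0)]
  simp

lemma piN_d₂ (a : Q₁) (v : V.obj (toOb (vtx Q₀ Q₁ t h (t a))))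
    (p : Quiver.Path (vtx Q₀ Q₁ t h (h a)) y) (c : k) :
    piN k V y (d₂tot k V y ((DirectSum.lof k Q₁ _ a) (v ⊗ₜ Finsupp.single p c))) = 0 := by
  classical
  rw [d₂tot_lof, dV₂_tmul k V y a v p c, piN, ofStd₀_lof, if_neg (length_comp_arrow a p)]
  simp

lemma rr_lof {x : QuiverOf Q₀ Q₁ t h} (v : V.obj (toOb x)) (p : Quiver.Path x y) (c : k)
    (hp : ¬ p.length = 0) (a : Q₁) (ha : vtx Q₀ Q₁ t h (t a) = x)
    (q : Quiver.Path (vtx Q₀ Q₁ t h (h a)) y)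
    (hpq : p = ((Quiver.Hom.toPath (arrowOf Q₀ t h a)).comp q).cast ha rfl) :
    rr k V y ((DirectSum.lof k (QuiverOf Q₀ Q₁ t h)
        (fun x => TensorProduct k (V.obj (toOb x)) (Quiver.Path x y →₀ k)) x)
      (v ⊗ₜ Finsupp.single p c)) =
      c • (DirectSum.lof k Q₁
        (fun a => TensorProduct k (V.obj (toOb (vtx Q₀ Q₁ t h (t a))))
          (Quiver.Path (vtx Q₀ Q₁ t h (h a)) y →₀ k)) a)
        ((((V.map (eqToHom (congrArg toOb ha.symm))).hom :
            V.obj (toOb x) →ₗ[k] V.obj (toOb (vtx Q₀ Q₁ t h (t a)))) v) ⊗ₜ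
          Finsupp.single q 1) := by
  classical
  rw [rr, ofStd₀_lof, dif_neg hp]
  have spec := (StdRes.decomp p hp).choose_spec.choose_spec.choose_spec
  obtain ⟨haa, hq⟩ := StdRes.decomp_unique (StdRes.decomp p hp).choose_spec.choose ha
    (spec.symm.trans hpq)
  subst haa
  have hq' := eq_of_heq hq
  subst hq'
  rfl

lemma rr_d₂ (a : Q₁) (v : V.obj (toOb (vtx Q₀ Q₁ t h (t a))))
    (p : Quiver.Path (vtx Q₀ Q₁ t h (h a)) y) (c : k) :
    rr k V y (d₂tot k V y ((DirectSum.lof k Q₁ _ a) (v ⊗ₜ Finsupp.single p c))) =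
      (DirectSum.lof k Q₁ _ a) (v ⊗ₜ Finsupp.single p c) := by
  classical
  rw [d₂tot_lof, dV₂_tmul k V y a v p c,
    rr_lof k V y v _ c (length_comp_arrow a p) a rfl p (Quiver.Path.cast_rfl_rfl _).symm]
  have : ((V.map (eqToHom (congrArg toOb (rfl : vtx Q₀ Q₁ t h (t a) = vtx Q₀ Q₁ t h (t a)).symm))).hom :
      V.obj (toOb (vtx Q₀ Q₁ t h (t a))) →ₗ[k] V.obj (toOb (vtx Q₀ Q₁ t h (t a)))) = LinearMap.id := by
    rw [show eqToHom (congrArg toOb (rfl : vtx Q₀ Q₁ t h (t a) = vtx Q₀ Q₁ t h (t a)).symm) =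
      𝟙 (toOb (vtx Q₀ Q₁ t h (t a))) from rfl, CategoryTheory.Functor.map_id]
    rfl
  rw [this]
  have hploc : v ⊗ₜ[k] Finsupp.single p c = c • (v ⊗ₜ[k] Finsupp.single p (1:k)) := by
    rw [← Finsupp.smul_single_one, TensorProduct.tmul_smul]
  rw [hploc, map_smul, LinearMap.id_apply]

end Linear

end StdRes

set_option maxHeartbeats 1000000

/-- For a finite acyclic quiver `Q`, a field `k` and a representation `V`
of `Q` with finite-dimensional vertex spaces, the standard sequence
`0 → ⊕_{a∈Q₁} V(ta) ⊗ P_{ha} →^{d^V} ⊕_{x∈Q₀} V(x) ⊗ P_x →^{f^V} V → 0`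
is exact at every vertex `y`: `d^V` is injective, the range of `d^V` is the kernel of
`f^V`, and `f^V` is surjective. -/
theorem standard_projective_resolution_exact
    [Fintype Q₀] [Fintype Q₁]
    (hacyclic : ∀ (x : QuiverOf Q₀ Q₁ t h) (p : Quiver.Path x x), p = Quiver.Path.nil)
    (V : RepOf k Q₀ Q₁ t h)
    (hV : ∀ x : QuiverOf Q₀ Q₁ t h, FiniteDimensional k (V.obj (toOb x)))
    (y : QuiverOf Q₀ Q₁ t h) :
    Function.Injective (dV k V y) ∧
      LinearMap.range (dV k V y) = LinearMap.ker (fV k V y) ∧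
      Function.Surjective (fV k V y) := by
  classical
  open StdRes in
  haveI hVfd : ∀ x : QuiverOf Q₀ Q₁ t h, FiniteDimensional k (V.obj (toOb x)) := hV
  haveI hPfin : ∀ x : QuiverOf Q₀ Q₁ t h, Finite (Quiver.Path x y) :=
    StdRes.finite_path hacyclic y
  haveI : Fintype (QuiverOf Q₀ Q₁ t h) := inferInstanceAs (Fintype Q₀)
  letI : AddCommGroup (Std₀ k V y) :=
    inferInstanceAs (AddCommGroup
      (Π₀ x : QuiverOf Q₀ Q₁ t h, TensorProduct k (V.obj (toOb x)) (Quiver.Path x y →₀ k)))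
  letI : AddCommGroup (Std₁ k V y) :=
    inferInstanceAs (AddCommGroup (Π₀ a : Q₁, TensorProduct k (V.obj (toOb (t a)))
      (Quiver.Path (vtx Q₀ Q₁ t h (h a)) y →₀ k)))
  haveI : FiniteDimensional k (Std₀ k V y) :=
    Module.Finite.equiv (DirectSum.linearEquivFunOnFintype k _ _).symm
  haveI : ∀ a : Q₁, FiniteDimensional k (V.obj (toOb (t a))) := fun a => hV _
  haveI : FiniteDimensional k (Std₁ k V y) :=
    Module.Finite.equiv (DirectSum.linearEquivFunOnFintype k _ _).symm
  have hsurj : Function.Surjective (fV k V y) :=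
    fun w => ⟨StdRes.sig k V y w, StdRes.fV_sig k V y w⟩
  -- the span result
  set S : Submodule k (Std₀ k V y) :=
    LinearMap.range (dV k V y) ⊔ LinearMap.range (StdRes.sig k V y) with hSdef
  have hnil : ∀ v : V.obj (toOb y),
      (DirectSum.lof k (QuiverOf Q₀ Q₁ t h)
        (fun x => TensorProduct k (V.obj (toOb x)) (Quiver.Path x y →₀ k)) y)
          (v ⊗ₜ Finsupp.single Quiver.Path.nil (1:k)) ∈ S :=
    fun v => Submodule.mem_sup_right ⟨v, rfl⟩
  have hgen : ∀ (n : ℕ) (x : QuiverOf Q₀ Q₁ t h) (p : Quiver.Path x y), p.length ≤ n →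
      ∀ v : V.obj (toOb x),
      (DirectSum.lof k (QuiverOf Q₀ Q₁ t h)
        (fun x => TensorProduct k (V.obj (toOb x)) (Quiver.Path x y →₀ k)) x)
          (v ⊗ₜ Finsupp.single p (1:k)) ∈ S := by
    intro n
    induction n with
    | zero =>
      intro x p hp v
      have hxy := p.eq_of_length_zero (Nat.le_zero.mp hp)
      subst hxy
      rw [hacyclic x p]
      exact hnil v
    | succ n ihn =>
      intro x p hp v
      by_cases h0 : p.length = 0
      · have hxy := p.eq_of_length_zero h0
        subst hxy
        rw [hacyclic x p]
        exact hnil v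
      · obtain ⟨a, ha, q, hpq⟩ := StdRes.decomp p h0
        have hlen : q.length ≤ n := by
          have hl := congrArg Quiver.Path.length hpq
          erw [StdRes.length_cast, Quiver.Path.length_comp] at hl
          simp only [Quiver.Hom.toPath, Quiver.Path.length_cons, Quiver.Path.length_nil] at hl
          change _ = 0 + 1 + _ at hl
          omega
        subst ha
        rw [Quiver.Path.cast_rfl_rfl] at hpq
        subst hpq
        have e1 : (DirectSum.lof k (QuiverOf Q₀ Q₁ t h)
              (fun x => TensorProduct k (V.obj (toOb x)) (Quiver.Path x y →₀ k))
              (vtx Q₀ Q₁ t h (t a)))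
              (v ⊗ₜ Finsupp.single ((Quiver.Hom.toPath (arrowOf Q₀ t h a)).comp q) (1:k))
            = (DirectSum.lof k (QuiverOf Q₀ Q₁ t h)
              (fun x => TensorProduct k (V.obj (toOb x)) (Quiver.Path x y →₀ k))
              (vtx Q₀ Q₁ t h (h a))) ((arrowMap k V a v) ⊗ₜ Finsupp.single q (1:k))
              + (-1 : k) • dV k V y ((DirectSum.lof k Q₁ _ a) (v ⊗ₜ Finsupp.single q (1:k))) := by
          rw [StdRes.dV_lof, StdRes.dV₁_tmul, StdRes.dV₂_tmul]
          module
        rw [e1]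
        exact add_mem (ihn _ q hlen _)
          (Submodule.smul_mem _ _ (Submodule.mem_sup_left (LinearMap.mem_range_self _ _)))
  have hTop : S = ⊤ := by
    rw [eq_top_iff]
    rintro ω -
    induction ω using DirectSum.induction_on with
    | zero => exact zero_mem S
    | of x w =>
      rw [← DirectSum.lof_eq_of k]
      induction w using TensorProduct.induction_on with
      | zero => rw [map_zero]; exact zero_mem S
      | tmul v n =>
        induction n using Finsupp.induction_linear with
        | zero => rw [TensorProduct.tmul_zero, map_zero]; exact zero_mem S
        | add n₁ n₂ hn₁ hn₂ => rw [TensorProduct.tmul_add, map_add]; exact add_mem hn₁ hn₂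
        | single p c =>
          have hc : v ⊗ₜ[k] Finsupp.single p c = c • (v ⊗ₜ[k] Finsupp.single p (1:k)) := by
            rw [← Finsupp.smul_single_one, TensorProduct.tmul_smul]
          rw [hc, map_smul]
          exact Submodule.smul_mem _ _ (hgen p.length x p le_rfl v)
      | add w₁ w₂ hw₁ hw₂ => rw [map_add]; exact add_mem hw₁ hw₂
    | add ω₁ ω₂ h₁ h₂ => exact add_mem h₁ h₂
  have hfd : ∀ ξ, fV k V y (dV k V y ξ) = 0 := by
    have hcomp : (fV k V y).comp (dV k V y) = 0 := by
      apply StdRes.std₁_hom_ext k V y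
      intro a v p
      rw [LinearMap.comp_apply, StdRes.dV_lof, map_add, map_smul, StdRes.dV₁_tmul,
        StdRes.dV₂_tmul, StdRes.fV_lof, StdRes.fV_lof, StdRes.map_comp_arrow]
      simp [LinearMap.comp_apply]
    intro ξ
    simpa using LinearMap.congr_fun hcomp ξ
  have hrange : LinearMap.range (dV k V y) = LinearMap.ker (fV k V y) := by
    apply le_antisymm
    · rintro _ ⟨ξ, rfl⟩
      exact LinearMap.mem_ker.mpr (hfd ξ)
    · intro ω hω
      have hωS : ω ∈ S := hTop ▸ Submodule.mem_top
      obtain ⟨u, hu, z, hz, huz⟩ := Submodule.mem_sup.mp hωS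
      obtain ⟨w0, rfl⟩ := hz
      obtain ⟨ξ, rfl⟩ := hu
      have h2 : w0 = 0 := by
        have h3 := LinearMap.mem_ker.mp hω
        rw [← huz, map_add, hfd ξ, StdRes.fV_sig, zero_add] at h3
        exact h3
      rw [← huz, h2, map_zero, add_zero]
      exact LinearMap.mem_range_self _ _
  have hπd : (StdRes.piN k V y).comp (StdRes.d₂tot k V y) = 0 := by
    apply StdRes.std₁_hom_ext k V y
    intro a v p
    rw [LinearMap.comp_apply, StdRes.piN_d₂]
    rfl
  have hrd : (StdRes.rr k V y).comp (StdRes.d₂tot k V y) = LinearMap.id := by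
    apply StdRes.std₁_hom_ext k V y
    intro a v p
    rw [LinearMap.comp_apply, StdRes.rr_d₂]
    rfl
  set Φ : (V.obj (toOb y) × Std₁ k V y) →ₗ[k] Std₀ k V y :=
    (StdRes.sig k V y).coprod (StdRes.d₂tot k V y) with hΦ
  have hleft : Function.LeftInverse ((StdRes.piN k V y).prod (StdRes.rr k V y)) Φ := by
    rintro ⟨w, ξ⟩
    have hπ := LinearMap.congr_fun hπd ξ
    have hr := LinearMap.congr_fun hrd ξ
    rw [LinearMap.comp_apply, LinearMap.zero_apply] at hπ
    rw [LinearMap.comp_apply, LinearMap.id_apply] at hr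
    show ((StdRes.piN k V y) (Φ (w, ξ)), (StdRes.rr k V y) (Φ (w, ξ))) = (w, ξ)
    rw [hΦ, LinearMap.coprod_apply, map_add, map_add, StdRes.piN_sig, StdRes.rr_sig, hπ, hr,
      add_zero, zero_add]
  have hΦinj : Function.Injective Φ := hleft.injective
  have hle := LinearMap.finrank_le_finrank_of_injective hΦinj
  rw [Module.finrank_prod] at hle
  have hrn₀ := LinearMap.finrank_range_add_finrank_ker (fV k V y)
  have hrt : LinearMap.range (fV k V y) = ⊤ := LinearMap.range_eq_top.mpr hsurj
  rw [hrt, finrank_top] at hrn₀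
  have hrn₁ := LinearMap.finrank_range_add_finrank_ker (dV k V y)
  rw [hrange] at hrn₁
  have hker0 : Module.finrank k (LinearMap.ker (dV k V y)) = 0 := by omega
  have hinj : Function.Injective (dV k V y) := by
    rw [← LinearMap.ker_eq_bot]
    exact Submodule.finrank_eq_zero.mp hker0
  exact ⟨hinj, hrange, hsurj⟩
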